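/- In the mixed-measure setting, let f̃ : I → ℝ be measurable and μ-square-integrable with ∫_I f̃ dμ = 0. Define f̃_c : C → ℝ by f̃_c(t) = f̃(t) − (1/λ(I)) ∫_C f̃ dλ, and f̃_d : D• → ℝ by f̃_d(t_d) = f̃(t_d) for d = 1, …, D and f̃_d(t_{D+1}) = (1/λ(I)) ∫_C f̃ dλ. Then: (i) ∫_C f̃_c dλ = 0; (ii) Σ_{d=1}^{D+1} w_d f̃_d(t_d) = 0; and (iii) f̃(t) = ι̃_c(f̃_c)(t) + ι̃_d(f̃_d)(t) for every t ∈ I, where ι̃_c(f̃_c) equals f̃_c on C and 0 on D, and ι̃_d(f̃_d) equals f̃_d(t_{D+1}) on C and f̃_d(t_d) at each t_d ∈ D. Hence every element of L²₀(μ) decomposes into a continuous component in L²₀(λ) and a discrete component in L²₀(δ•). -/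

import Mathlib

open MeasureTheory
open scoped Classical

/-- The mixed reference measure `μ = Σ_d w_d δ_{t_d} + λ`, where `λ` is Lebesgue measure
restricted to `I`. -/
noncomputable def mixedMeasure (I : Set ℝ) (n : ℕ) (t : Fin n → ℝ) (w : Fin n → ℝ) :
    Measure ℝ :=
  (∑ d, ENNReal.ofReal (w d) • Measure.dirac (t d)) + volume.restrict I

/-- In the mixed-measure setting, every `f̃ ∈ L²₀(μ)` decomposes into a continuous component
`f̃_c = f̃ − c` on `C = I ∖ D` (with `c = (1/λ(I)) ∫_C f̃ dλ`) lying in `L²₀(λ)` and a discrete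
component `f̃_d` (with `f̃_d(t_d) = f̃(t_d)` and `f̃_d(t_{D+1}) = c`) lying in `L²₀(δ•)`:
(i) `∫_C f̃_c dλ = 0`; (ii) `Σ_d w_d f̃_d(t_d) + λ(I) c = 0`; and
(iii) `f̃ = ι̃_c(f̃_c) + ι̃_d(f̃_d)` on `I`. -/
theorem mixed_L2_decomposition
    (I : Set ℝ) (hImeas : MeasurableSet I) (hIconn : I.OrdConnected)
    (hI0 : 0 < volume I) (hIfin : volume I < ⊤)
    (n : ℕ) (t : Fin n → ℝ) (htinj : Function.Injective t) (htI : ∀ d, t d ∈ I)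
    (w : Fin n → ℝ) (hw : ∀ d, 0 < w d)
    (ft : ℝ → ℝ) (hft : Measurable ft)
    (hsq : Integrable (fun x => (ft x) ^ 2) (mixedMeasure I n t w))
    (hzero : ∫ x, ft x ∂(mixedMeasure I n t w) = 0)
    (c : ℝ)
    (hc : c = (volume I).toReal⁻¹ * ∫ x in I \ Set.range t, ft x ∂(volume.restrict I)) :
    (∫ x in I \ Set.range t, (ft x - c) ∂(volume.restrict I) = 0) ∧
      (∑ d, w d * ft (t d) + (volume I).toReal * c = 0) ∧
      (∀ x ∈ I, ft x = (if x ∈ Set.range t then 0 else ft x - c) +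
        (if x ∈ Set.range t then ft x else c)) := by
  -- basic facts
  have hS : volume (Set.range t) = 0 := (Set.finite_range t).measure_zero _
  have hSmeas : MeasurableSet (Set.range t) := (Set.finite_range t).measurableSet
  have hsub : (I \ Set.range t) ⊆ I := Set.diff_subset
  have hres : ((volume.restrict I).restrict (I \ Set.range t)) = volume.restrict I := by
    rw [Measure.restrict_restrict (hImeas.diff hSmeas)]
    rw [Set.inter_eq_self_of_subset_left hsub]
    exact Measure.restrict_congr_set
      (MeasureTheory.diff_ae_eq_self.2 (measure_mono_null Set.inter_subset_right hS))
  have hfin : IsFiniteMeasure (volume.restrict I) := by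
    constructor
    simpa [Measure.restrict_apply_univ] using hIfin
  have hIntI : Integrable ft (volume.restrict I) := by
    have h2 : Integrable (fun x => (ft x) ^ 2) (volume.restrict I) :=
      hsq.mono_measure (Measure.le_add_left le_rfl)
    have hm : MemLp ft 2 (volume.restrict I) := by
      rw [memLp_two_iff_integrable_sq hft.aestronglyMeasurable]
      exact h2
    exact hm.integrable (by norm_num)
  have hvol0 : (volume I).toReal ≠ 0 := by
    have := ENNReal.toReal_pos hI0.ne' hIfin.ne
    positivity
  have hIc : ∫ x, ft x ∂(volume.restrict I) = (volume I).toReal * c := by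
    rw [hc, show (∫ x in I \ Set.range t, ft x ∂(volume.restrict I))
        = ∫ x, ft x ∂(volume.restrict I) from by rw [hres]]
    field_simp
  refine ⟨?_, ?_, ?_⟩
  · rw [show (∫ x in I \ Set.range t, (ft x - c) ∂(volume.restrict I))
        = ∫ x, (ft x - c) ∂(volume.restrict I) from by rw [hres]]
    rw [integral_sub hIntI (integrable_const c), hIc, integral_const]
    simp [Measure.restrict_apply_univ, smul_eq_mul, Measure.real]
  · have hIntd : ∀ d : Fin n, Integrable ft (ENNReal.ofReal (w d) • Measure.dirac (t d)) := by
      intro d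
      have : Integrable ft (Measure.dirac (t d)) := by
        refine (integrable_const (ft (t d))).congr ?_
        rw [Filter.EventuallyEq, MeasureTheory.ae_dirac_eq]
        exact Filter.eventually_pure.2 rfl
      exact this.smul_measure ENNReal.ofReal_ne_top
    have hIntsum : Integrable ft (∑ d, ENNReal.ofReal (w d) • Measure.dirac (t d)) :=
      integrable_finset_sum_measure.2 fun d _ => hIntd d
    have hz : (∫ x, ft x ∂(∑ d, ENNReal.ofReal (w d) • Measure.dirac (t d)))
        + ∫ x, ft x ∂(volume.restrict I) = 0 := by
      rw [← integral_add_measure hIntsum hIntI]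
      exact hzero
    rw [integral_finset_sum_measure (fun d _ => hIntd d)] at hz
    have heq : ∀ d : Fin n, (∫ x, ft x ∂(ENNReal.ofReal (w d) • Measure.dirac (t d)))
        = w d * ft (t d) := by
      intro d
      rw [integral_smul_measure, integral_dirac' ft (t d) hft.stronglyMeasurable,
        ENNReal.toReal_ofReal (hw d).le, smul_eq_mul]
    rw [Finset.sum_congr rfl (fun d _ => heq d), hIc] at hz
    exact hz
  · intro x _
    by_cases hx : x ∈ Set.range t <;> simp [hx]
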